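/- In the ring ℚ[[X]] of formal power series, let U be the unique power series with constant term 0 satisfying U = X·(1 + U²), and let E = Σ_{n≥0} e_n Xⁿ where e_n is the number of Dyck paths with catastrophes of length n. Then E·(X² + (X² + X − 1)·U) = (2X − 1)·U. -/

import Mathlib

open PowerSeries

/-- Validity of a path with catastrophes over the jump set `J`, starting from
altitude `h`: each step is either a jump `s ∈ J` keeping the altitude
nonnegative, or a catastrophe `s = -h` from an altitude `h > 0` with `-h ∉ J`
(landing at altitude `0`). -/
def CatValidFrom (J : Finset ℤ) : ℤ → List ℤ → Prop
  | _, [] => True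
  | h, s :: r =>
    ((s ∈ J ∧ 0 ≤ h + s) ∨ (s = -h ∧ 0 < h ∧ -h ∉ J)) ∧ CatValidFrom J (h + s) r

/-- The jump set of Dyck paths. For this jump set a catastrophe is a jump
`-h` from an altitude `h ≥ 2` to altitude `0`. -/
def dyckJ : Finset ℤ := {-1, 1}

/-- `l` is a Dyck path with catastrophes of length `n`. -/
def DyckCat (n : ℕ) (l : List ℤ) : Prop :=
  l.length = n ∧ CatValidFrom dyckJ 0 l ∧ l.sum = 0

/-- The number `e n` of Dyck paths with catastrophes of length `n`. -/
noncomputable def eCount (n : ℕ) : ℕ := Nat.card {l : List ℤ // DyckCat n l}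

/-- The generating function `E = ∑ e_n Xⁿ` of Dyck paths with catastrophes. -/
noncomputable def E : PowerSeries ℚ := PowerSeries.mk fun n => (eCount n : ℚ)

namespace DyckCatAux

lemma mem_dyckJ {s : ℤ} : s ∈ dyckJ ↔ s = -1 ∨ s = 1 := by simp [dyckJ]

lemma cvf_cons {J : Finset ℤ} {h s : ℤ} {r : List ℤ} :
    CatValidFrom J h (s :: r) ↔
      ((s ∈ J ∧ 0 ≤ h + s) ∨ (s = -h ∧ 0 < h ∧ -h ∉ J)) ∧ CatValidFrom J (h + s) r :=
  Iff.rfl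

/-- Paths with catastrophes from altitude `h` back to altitude `0`, of length `n`. -/
abbrev Spc (h : ℤ) (n : ℕ) : Type :=
  {l : List ℤ // l.length = n ∧ CatValidFrom dyckJ h l ∧ h + l.sum = 0}

instance (h : ℤ) : Subsingleton (Spc h 0) := by
  constructor
  rintro ⟨l, hl, -⟩ ⟨m, hm, -⟩
  apply Subtype.ext
  exact (List.length_eq_zero_iff.mp hl).trans (List.length_eq_zero_iff.mp hm).symm

/-- From altitude `0` the only admissible step is `+1`. -/
def g0 (n : ℕ) : Spc 1 n → Spc 0 (n + 1) := fun r =>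
  ⟨1 :: r.1, by
    obtain ⟨hlen, hv, hs⟩ := r.2
    refine ⟨by simp [hlen], ⟨Or.inl ⟨by simp [mem_dyckJ], by norm_num⟩, ?_⟩, ?_⟩
    · simpa using hv
    · simp only [List.sum_cons]; omega⟩

lemma g0_bij (n : ℕ) : Function.Bijective (g0 n) := by
  constructor
  · rintro ⟨a, ha⟩ ⟨b, hb⟩ hab
    simp only [g0, Subtype.mk.injEq, List.cons.injEq] at hab
    exact Subtype.ext (by simpa using hab)
  · rintro ⟨l, hlen, hv, hs⟩
    cases l with
    | nil => simp at hlen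
    | cons s t =>
      rw [cvf_cons] at hv
      obtain ⟨hstep, hv'⟩ := hv
      have hs1 : s = 1 := by
        rcases hstep with ⟨hmem, hge⟩ | ⟨-, hlt, -⟩
        · rcases mem_dyckJ.mp hmem with rfl | rfl <;> omega
        · omega
      subst hs1
      refine ⟨⟨t, by simpa using hlen, by simpa using hv', ?_⟩, Subtype.ext rfl⟩
      simp only [List.sum_cons] at hs; omega

/-- From altitude `1` the admissible steps are `-1` and `+1`. -/
def g1 (n : ℕ) : Spc 0 n ⊕ Spc 2 n → Spc 1 (n + 1)
  | .inl r =>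
    ⟨-1 :: r.1, by
      obtain ⟨hlen, hv, hs⟩ := r.2
      refine ⟨by simp [hlen], ⟨Or.inl ⟨by simp [mem_dyckJ], by norm_num⟩, ?_⟩, ?_⟩
      · simpa using hv
      · simp only [List.sum_cons]; omega⟩
  | .inr r =>
    ⟨1 :: r.1, by
      obtain ⟨hlen, hv, hs⟩ := r.2
      refine ⟨by simp [hlen], ⟨Or.inl ⟨by simp [mem_dyckJ], by norm_num⟩, ?_⟩, ?_⟩
      · simpa using hv
      · simp only [List.sum_cons]; omega⟩

lemma g1_bij (n : ℕ) : Function.Bijective (g1 n) := by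
  constructor
  · rintro (a | a) (b | b) hab <;>
      simp only [g1, Subtype.mk.injEq, List.cons.injEq] at hab
    · exact congrArg Sum.inl (Subtype.ext (by simpa using hab))
    · exact absurd hab.1 (by norm_num)
    · exact absurd hab.1 (by norm_num)
    · exact congrArg Sum.inr (Subtype.ext (by simpa using hab))
  · rintro ⟨l, hlen, hv, hs⟩
    cases l with
    | nil => simp at hlen
    | cons s t =>
      rw [cvf_cons] at hv
      obtain ⟨hstep, hv'⟩ := hv
      simp only [List.sum_cons] at hs
      have hs1 : s = -1 ∨ s = 1 := by
        rcases hstep with ⟨hmem, -⟩ | ⟨rfl, -, hnot⟩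
        · exact mem_dyckJ.mp hmem
        · exact absurd (mem_dyckJ.mpr (Or.inl rfl)) hnot
      rcases hs1 with rfl | rfl
      · refine ⟨.inl ⟨t, by simpa using hlen, by simpa using hv', by omega⟩, Subtype.ext rfl⟩
      · refine ⟨.inr ⟨t, by simpa using hlen, by simpa using hv', by omega⟩, Subtype.ext rfl⟩

/-- From altitude `h ≥ 2` the admissible steps are `-1`, `+1` and the
catastrophe `-h`. -/
def g2 (h : ℤ) (hh : 2 ≤ h) (n : ℕ) :
    (Spc (h - 1) n ⊕ Spc (h + 1) n) ⊕ Spc 0 n → Spc h (n + 1)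
  | .inl (.inl r) =>
    ⟨-1 :: r.1, by
      obtain ⟨hlen, hv, hs⟩ := r.2
      refine ⟨by simp [hlen], ⟨Or.inl ⟨by simp [mem_dyckJ], by omega⟩, ?_⟩, ?_⟩
      · have : h + -1 = h - 1 := by ring
        rw [this]; exact hv
      · simp only [List.sum_cons]; omega⟩
  | .inl (.inr r) =>
    ⟨1 :: r.1, by
      obtain ⟨hlen, hv, hs⟩ := r.2
      refine ⟨by simp [hlen], ⟨Or.inl ⟨by simp [mem_dyckJ], by omega⟩, ?_⟩, ?_⟩
      · exact hv
      · simp only [List.sum_cons]; omega⟩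
  | .inr r =>
    ⟨-h :: r.1, by
      obtain ⟨hlen, hv, hs⟩ := r.2
      refine ⟨by simp [hlen], ⟨Or.inr ⟨rfl, by omega, ?_⟩, ?_⟩, ?_⟩
      · rw [mem_dyckJ]; omega
      · have : h + -h = 0 := by ring
        rw [this]; exact hv
      · simp only [List.sum_cons]; omega⟩

lemma g2_bij (h : ℤ) (hh : 2 ≤ h) (n : ℕ) : Function.Bijective (g2 h hh n) := by
  constructor
  · rintro ((a | a) | a) ((b | b) | b) hab <;>
      simp only [g2, Subtype.mk.injEq, List.cons.injEq] at hab
    · exact congrArg Sum.inl (congrArg Sum.inl (Subtype.ext (by simpa using hab)))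
    · exact absurd hab.1 (by norm_num)
    · exact absurd hab.1 (by omega)
    · exact absurd hab.1 (by norm_num)
    · exact congrArg Sum.inl (congrArg Sum.inr (Subtype.ext (by simpa using hab)))
    · exact absurd hab.1 (by omega)
    · exact absurd hab.1 (by omega)
    · exact absurd hab.1 (by omega)
    · exact congrArg Sum.inr (Subtype.ext (by simpa using hab))
  · rintro ⟨l, hlen, hv, hs⟩
    cases l with
    | nil => simp at hlen
    | cons s t =>
      rw [cvf_cons] at hv
      obtain ⟨hstep, hv'⟩ := hv
      simp only [List.sum_cons] at hs
      have hcase : s = -1 ∨ s = 1 ∨ s = -h := by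
        rcases hstep with ⟨hmem, -⟩ | ⟨rfl, -, -⟩
        · rcases mem_dyckJ.mp hmem with rfl | rfl
          · exact Or.inl rfl
          · exact Or.inr (Or.inl rfl)
        · exact Or.inr (Or.inr rfl)
      rcases hcase with rfl | rfl | rfl
      · refine ⟨.inl (.inl ⟨t, by simpa using hlen, ?_, by omega⟩), Subtype.ext rfl⟩
        have : h - 1 = h + -1 := by ring
        rw [this]; exact hv'
      · exact ⟨.inl (.inr ⟨t, by simpa using hlen, hv', by omega⟩), Subtype.ext rfl⟩
      · refine ⟨.inr ⟨t, by simpa using hlen, ?_, by omega⟩, Subtype.ext rfl⟩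
        have : (0 : ℤ) = h + -h := by ring
        rw [this]; exact hv'

lemma finite_Spc : ∀ (n : ℕ) (h : ℤ), 0 ≤ h → Finite (Spc h n) := by
  intro n
  induction n with
  | zero =>
    intro h _
    exact Finite.of_injective (fun (_ : Spc h 0) => PUnit.unit)
      fun a b _ => Subsingleton.elim a b
  | succ n ih =>
    intro h hh
    by_cases h0 : h = 0
    · subst h0
      have : Finite (Spc 1 n) := ih 1 (by norm_num)
      exact Finite.of_surjective (g0 n) (g0_bij n).2
    by_cases h1 : h = 1
    · subst h1
      have f1 : Finite (Spc 0 n) := ih 0 le_rfl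
      have f2 : Finite (Spc 2 n) := ih 2 (by norm_num)
      exact Finite.of_surjective (g1 n) (g1_bij n).2
    · have h2 : 2 ≤ h := by omega
      have f1 : Finite (Spc (h - 1) n) := ih _ (by omega)
      have f2 : Finite (Spc (h + 1) n) := ih _ (by omega)
      have f3 : Finite (Spc 0 n) := ih 0 le_rfl
      exact Finite.of_surjective (g2 h h2 n) (g2_bij h h2 n).2

lemma card_zero_zero : Nat.card (Spc 0 0) = 1 := by
  have : Nonempty (Spc 0 0) := ⟨⟨[], rfl, trivial, by simp⟩⟩
  haveI : Finite (Spc 0 0) := finite_Spc 0 0 le_rfl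
  exact Nat.card_eq_one_iff_exists.mpr
    ⟨⟨[], rfl, trivial, by simp⟩, fun a => Subsingleton.elim a _⟩

lemma card_zero_of_ne (h : ℤ) (hne : h ≠ 0) : Nat.card (Spc h 0) = 0 := by
  have : IsEmpty (Spc h 0) := by
    constructor
    rintro ⟨l, hl, -, hs⟩
    rw [List.length_eq_zero_iff.mp hl] at hs
    simp at hs
    exact hne hs
  exact Nat.card_of_isEmpty

lemma card_rec0 (n : ℕ) : Nat.card (Spc 0 (n + 1)) = Nat.card (Spc 1 n) :=
  (Nat.card_congr (Equiv.ofBijective (g0 n) (g0_bij n))).symm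

lemma card_rec1 (n : ℕ) :
    Nat.card (Spc 1 (n + 1)) = Nat.card (Spc 0 n) + Nat.card (Spc 2 n) := by
  haveI : Finite (Spc 0 n) := finite_Spc n 0 le_rfl
  haveI : Finite (Spc 2 n) := finite_Spc n 2 (by norm_num)
  rw [← Nat.card_congr (Equiv.ofBijective (g1 n) (g1_bij n)), Nat.card_sum]

lemma card_rec2 (h : ℤ) (hh : 2 ≤ h) (n : ℕ) :
    Nat.card (Spc h (n + 1)) =
      Nat.card (Spc (h - 1) n) + Nat.card (Spc (h + 1) n) + Nat.card (Spc 0 n) := by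
  haveI : Finite (Spc (h - 1) n) := finite_Spc n _ (by omega)
  haveI : Finite (Spc (h + 1) n) := finite_Spc n _ (by omega)
  haveI : Finite (Spc 0 n) := finite_Spc n 0 le_rfl
  haveI : Finite (Spc (h-1) n ⊕ Spc (h+1) n) := inferInstance
  rw [← Nat.card_congr (Equiv.ofBijective (g2 h hh n) (g2_bij h hh n)), Nat.card_sum,
    Nat.card_sum]

/-! ### The power-series side -/

section PS

variable (U : PowerSeries ℚ)

/-- The "kernel" `K = 1 - 2X - X² + X²U`. -/
noncomputable def Kser : PowerSeries ℚ := 1 - 2 * X - X ^ 2 + X ^ 2 * U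

/-- The candidate generating function of paths from altitude `h`. -/
noncomputable def Cgf : ℕ → PowerSeries ℚ
  | 0 => (1 - 2 * X) * (Kser U)⁻¹
  | (h + 1) => X * (Kser U)⁻¹ * (1 - U ^ (h + 1))

variable {U}
variable (hU0 : constantCoeff U = 0) (hU : U = X * (1 + U ^ 2))

include hU0

lemma ccK : constantCoeff (Kser U) = 1 := by
  simp [Kser, hU0]

lemma Kne : Kser U ≠ 0 := by
  intro h
  have := ccK hU0
  rw [h] at this
  simp at this

lemma KKinv : Kser U * (Kser U)⁻¹ = 1 :=
  PowerSeries.mul_inv_cancel _ (by rw [ccK hU0]; norm_num)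

lemma ccKinv : constantCoeff (Kser U)⁻¹ = 1 := by
  have := congrArg (constantCoeff) (KKinv hU0)
  rw [map_mul, ccK hU0, one_mul, map_one] at this
  exact this

lemma ccC : ∀ h : ℕ, constantCoeff (Cgf U h) = if h = 0 then 1 else 0
  | 0 => by simp [Cgf, ccKinv hU0]
  | (h + 1) => by simp [Cgf]

lemma C_rec0 : Cgf U 0 = 1 + X * Cgf U 1 := by
  apply mul_right_cancel₀ (Kne hU0)
  have h1 : Cgf U 0 * Kser U = (1 - 2 * X) * (Kser U * (Kser U)⁻¹) := by
    simp only [Cgf]; ring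
  have h2 : (1 + X * Cgf U 1) * Kser U =
      Kser U + X ^ 2 * (1 - U ^ 1) * (Kser U * (Kser U)⁻¹) := by
    simp only [Cgf]; ring
  rw [h1, h2, KKinv hU0, mul_one, mul_one]
  simp only [Kser, pow_one]
  ring

include hU

lemma C_rec1 : Cgf U 1 = X * (Cgf U 0 + Cgf U 2) := by
  apply mul_right_cancel₀ (Kne hU0)
  have h1 : Cgf U 1 * Kser U = X * (1 - U ^ 1) * (Kser U * (Kser U)⁻¹) := by
    simp only [Cgf]; ring
  have h2 : X * (Cgf U 0 + Cgf U 2) * Kser U =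
      (X * (1 - 2 * X) + X ^ 2 * (1 - U ^ 2)) * (Kser U * (Kser U)⁻¹) := by
    simp only [Cgf]; ring
  rw [h1, h2, KKinv hU0, mul_one, mul_one]
  linear_combination (-(X : PowerSeries ℚ)) * hU

lemma C_rec2 (h : ℕ) :
    Cgf U (h + 2) = X * (Cgf U (h + 1) + Cgf U (h + 3) + Cgf U 0) := by
  apply mul_right_cancel₀ (Kne hU0)
  have h1 : Cgf U (h + 2) * Kser U = X * (1 - U ^ (h + 2)) * (Kser U * (Kser U)⁻¹) := by
    simp only [Cgf]; ring
  have h2 : X * (Cgf U (h + 1) + Cgf U (h + 3) + Cgf U 0) * Kser U =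
      (X * (X * (1 - U ^ (h + 1))) + X * (X * (1 - U ^ (h + 3))) + X * (1 - 2 * X)) *
        (Kser U * (Kser U)⁻¹) := by
    simp only [Cgf]; ring
  rw [h1, h2, KKinv hU0, mul_one, mul_one]
  linear_combination (-((X : PowerSeries ℚ) * U ^ (h + 1))) * hU

/-- The key identification of the counting sequences with the coefficients of
the candidate generating functions. -/
lemma main_count : ∀ (n h : ℕ),
    (Nat.card (Spc (h : ℤ) n) : ℚ) = coeff n (Cgf U h) := by
  intro n
  induction n with
  | zero =>
    intro h
    rw [coeff_zero_eq_constantCoeff, ccC hU0 h]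
    cases h with
    | zero =>
      simp only [Nat.cast_zero, card_zero_zero]
      norm_num
    | succ h =>
      rw [card_zero_of_ne _ (by exact_mod_cast Nat.succ_ne_zero h)]
      simp
  | succ n ih =>
    have ih0 : (Nat.card (Spc 0 n) : ℚ) = coeff n (Cgf U 0) := by simpa using ih 0
    have ih1 : (Nat.card (Spc 1 n) : ℚ) = coeff n (Cgf U 1) := by simpa using ih 1
    have ih2 : (Nat.card (Spc 2 n) : ℚ) = coeff n (Cgf U 2) := by simpa using ih 2
    intro h
    match h with
    | 0 =>
      simp only [Nat.cast_zero]
      rw [card_rec0 n, ih1, C_rec0 hU0, map_add, coeff_succ_X_mul]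
      simp
    | 1 =>
      simp only [Nat.cast_one]
      rw [card_rec1 n]
      push_cast
      rw [ih0, ih2, C_rec1 hU0 hU, coeff_succ_X_mul, map_add]
    | (h + 2) =>
      have h2 : (2 : ℤ) ≤ ((h + 2 : ℕ) : ℤ) := by push_cast; omega
      rw [card_rec2 _ h2 n]
      have e1 : ((h + 2 : ℕ) : ℤ) - 1 = ((h + 1 : ℕ) : ℤ) := by push_cast; ring
      have e2 : ((h + 2 : ℕ) : ℤ) + 1 = ((h + 3 : ℕ) : ℤ) := by push_cast; ring
      rw [e1, e2]
      have ihA : (Nat.card (Spc ((h : ℤ) + 1) n) : ℚ) = coeff n (Cgf U (h + 1)) := by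
        have := ih (h + 1); push_cast at this; exact this
      have ihB : (Nat.card (Spc ((h : ℤ) + 3) n) : ℚ) = coeff n (Cgf U (h + 3)) := by
        have := ih (h + 3); push_cast at this; exact this
      push_cast
      rw [ihA, ihB, ih0, C_rec2 hU0 hU h, coeff_succ_X_mul, map_add, map_add]

omit hU0 hU

lemma eCount_eq (n : ℕ) : eCount n = Nat.card (Spc (0 : ℤ) n) := by
  apply Nat.card_congr
  apply Equiv.subtypeEquivRight
  intro l
  simp [DyckCat, Spc]

include hU0 hU

lemma E_eq : E = Cgf U 0 := by
  ext n
  rw [E, coeff_mk, eCount_eq, ← main_count hU0 hU n 0, Nat.cast_zero]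

end PS

end DyckCatAux

/-- **Algebraic equation for Dyck paths with catastrophes.** If `U` is the
(unique) power series with constant term `0` satisfying `U = X·(1 + U²)`, then
`E·(X² + (X² + X - 1)·U) = (2X - 1)·U`. -/
theorem E_mul_eq (U : PowerSeries ℚ) (hU0 : constantCoeff U = 0)
    (hU : U = X * (1 + U ^ 2)) :
    E * (X ^ 2 + (X ^ 2 + X - 1) * U) = (2 * X - 1) * U := by
  rw [DyckCatAux.E_eq hU0 hU]
  apply mul_right_cancel₀ (DyckCatAux.Kne hU0)
  have h1 : DyckCatAux.Cgf U 0 * (X ^ 2 + (X ^ 2 + X - 1) * U) * DyckCatAux.Kser U =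
      (1 - 2 * X) * (X ^ 2 + (X ^ 2 + X - 1) * U) *
        (DyckCatAux.Kser U * (DyckCatAux.Kser U)⁻¹) := by
    simp only [DyckCatAux.Cgf]; ring
  rw [h1, DyckCatAux.KKinv hU0, mul_one]
  simp only [DyckCatAux.Kser]
  linear_combination ((X : PowerSeries ℚ) * (2 * X - 1)) * hU
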